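/- Let k be a positive integer, n ∈ {1,…,2^{k−1}} and let m ≥ 2 be a natural number. For every x with (n−1)/2^{k−1} ≤ x ≤ n/2^{k−1}, writing θ = 2^k x − 2n + 1, the first integral of the Chebyshev wavelet satisfies ∫₀^x φ_{nm}(τ) dτ = γ_m 2^{−(k−1)/2 − 2} [ T_{m+1}(θ)/(m+1) − T_{m−1}(θ)/(m−1) + μ_m ], where μ_m = (−1)^{m−1}/(m−1) − (−1)^{m+1}/(m+1). -/

import Mathlib

open Real intervalIntegral

/-- Normalizing constant of the Chebyshev wavelets: `γ 0 = √(2/π)`, `γ m = 2/√π` for `m ≥ 1`. -/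
noncomputable def chebGamma (m : ℕ) : ℝ :=
  if m = 0 then Real.sqrt (2 / Real.pi) else 2 / Real.sqrt Real.pi

open Polynomial Polynomial.Chebyshev in
lemma cheb_T_eval_neg_one (j : ℤ) : (T ℝ j).eval (-1) = (-1 : ℝ) ^ j := by
  have h := Polynomial.Chebyshev.T_real_cos Real.pi j
  rw [Real.cos_pi] at h
  rw [h]
  simpa using Real.cos_int_mul_pi_sub 0 j

open Polynomial Polynomial.Chebyshev in
lemma cheb_deriv_key (m : ℕ) (hm : 2 ≤ m) (t : ℝ) :
    ((derivative (T ℝ ((m : ℤ) + 1))).eval t) * ((m : ℝ) - 1)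
      - ((derivative (T ℝ ((m : ℤ) - 1))).eval t) * ((m : ℝ) + 1)
      = 2 * ((m : ℝ) + 1) * ((m : ℝ) - 1) * (T ℝ (m : ℤ)).eval t := by
  have hm1 : ((m : ℝ) + 1) ≠ 0 := by positivity
  have hm2 : ((m : ℝ) - 1) ≠ 0 := by
    have : (2 : ℝ) ≤ m := by exact_mod_cast hm
    nlinarith
  rw [T_derivative_eq_U (R := ℝ) ((m : ℤ) + 1), T_derivative_eq_U (R := ℝ) ((m : ℤ) - 1)]
  have h1 := congrArg (eval t) (U_sub_two ℝ (m : ℤ))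
  have h2 := congrArg (eval t) (T_eq_U_sub_X_mul_U ℝ (m : ℤ))
  simp only [eval_mul, eval_sub, eval_ofNat, eval_X, eval_intCast] at h1 h2 ⊢
  push_cast
  have he : ((m:ℤ) - 1 - 1) = (m:ℤ) - 2 := by ring
  rw [he]
  have he2 : ((m:ℤ) + 1 - 1) = (m:ℤ) := by ring
  rw [he2]
  linear_combination (-((m:ℝ)+1)*((m:ℝ)-1)) * h1 - 2*((m:ℝ)+1)*((m:ℝ)-1) * h2

/-- **First integral of the Chebyshev wavelet for `m ≥ 2`, middle case (Eq. (2.14)).**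
For `x` in the support interval, with `θ = 2^k x − 2n + 1`,
`∫₀^x φ_{nm}(τ) dτ = γ_m 2^{−(k−1)/2−2} [T_{m+1}(θ)/(m+1) − T_{m−1}(θ)/(m−1) + μ_m]`
where `μ_m = (−1)^{m−1}/(m−1) − (−1)^{m+1}/(m+1)`. -/
theorem chebyshev_wavelet_first_integral_middle
    (k n m : ℕ) (hk : 0 < k) (hn1 : 1 ≤ n) (hn2 : n ≤ 2 ^ (k - 1)) (hm : 2 ≤ m)
    (x : ℝ) (hx1 : ((n : ℝ) - 1) / 2 ^ (k - 1) ≤ x) (hx2 : x ≤ (n : ℝ) / 2 ^ (k - 1)) :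
    ∫ τ in (0 : ℝ)..x,
        (if ((n : ℝ) - 1) / 2 ^ (k - 1) ≤ τ ∧ τ < (n : ℝ) / 2 ^ (k - 1) then
          chebGamma m * (2 : ℝ) ^ (((k : ℝ) - 1) / 2) *
            (Polynomial.Chebyshev.T ℝ (m : ℤ)).eval ((2 : ℝ) ^ k * τ - 2 * n + 1)
        else 0)
      = chebGamma m * (2 : ℝ) ^ (-((k : ℝ) - 1) / 2 - 2) *
          ((Polynomial.Chebyshev.T ℝ ((m : ℤ) + 1)).eval ((2 : ℝ) ^ k * x - 2 * n + 1) /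
              ((m : ℝ) + 1)
            - (Polynomial.Chebyshev.T ℝ ((m : ℤ) - 1)).eval ((2 : ℝ) ^ k * x - 2 * n + 1) /
              ((m : ℝ) - 1)
            + ((-1 : ℝ) ^ (m - 1) / ((m : ℝ) - 1) - (-1 : ℝ) ^ (m + 1) / ((m : ℝ) + 1))) := by
  have hK : (0:ℝ) < 2 ^ (k-1) := by positivity
  have hn1' : (1:ℝ) ≤ (n:ℝ) := by exact_mod_cast hn1
  set a : ℝ := ((n : ℝ) - 1) / 2 ^ (k - 1) with ha_def
  set b : ℝ := (n : ℝ) / 2 ^ (k - 1) with hb_def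
  set c : ℝ := chebGamma m * (2 : ℝ) ^ (((k : ℝ) - 1) / 2) with hc_def
  set g : ℝ → ℝ := fun τ =>
    c * (Polynomial.Chebyshev.T ℝ (m : ℤ)).eval ((2 : ℝ) ^ k * τ - 2 * n + 1) with hg_def
  set f : ℝ → ℝ := fun τ => if a ≤ τ ∧ τ < b then g τ else 0 with hf_def
  have h2k : (2:ℝ)^k = 2 * 2^(k-1) := by
    cases k with
    | zero => omega
    | succ k' => rw [pow_succ']; simp
  have ha0 : 0 ≤ a := div_nonneg (by linarith) hK.le
  have hgc : Continuous g := by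
    have h1 : Continuous fun τ : ℝ => (2 : ℝ) ^ k * τ - 2 * n + 1 := by continuity
    exact continuous_const.mul (((Polynomial.Chebyshev.T ℝ (m : ℤ)).continuous).comp h1)
  have hfi : ∀ u v : ℝ, IntervalIntegrable f MeasureTheory.volume u v := by
    intro u v
    have hind : f = Set.indicator (Set.Ico a b) g := by
      funext τ
      simp [hf_def, Set.indicator_apply, Set.mem_Ico]
    have hg' := hgc.intervalIntegrable (μ := MeasureTheory.volume) u v
    rw [intervalIntegrable_iff] at hg' ⊢
    rw [hind]
    exact hg'.indicator measurableSet_Ico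
  have hae_a : ∀ᵐ τ : ℝ, τ ≠ a := by
    rw [MeasureTheory.ae_iff]
    simpa [Set.setOf_eq_eq_singleton] using Real.volume_singleton (a := a)
  have hae_b : ∀ᵐ τ : ℝ, τ ≠ b := by
    rw [MeasureTheory.ae_iff]
    simpa [Set.setOf_eq_eq_singleton] using Real.volume_singleton (a := b)
  have h0a : (∫ τ in (0:ℝ)..a, f τ) = 0 := by
    rw [intervalIntegral.integral_congr_ae (g := fun _ => (0:ℝ))
      (hae_a.mono fun τ hτ hmem => ?_)]
    · simp
    · rw [Set.uIoc_of_le ha0] at hmem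
      have : ¬ (a ≤ τ ∧ τ < b) := fun h => hτ (le_antisymm hmem.2 h.1)
      simp [hf_def, this]
  have hax : (∫ τ in a..x, f τ) = ∫ τ in a..x, g τ := by
    refine intervalIntegral.integral_congr_ae (hae_b.mono fun τ hτ hmem => ?_)
    rw [Set.uIoc_of_le hx1] at hmem
    have h1 : a ≤ τ := hmem.1.le
    have h2 : τ < b := lt_of_le_of_ne (hmem.2.trans hx2) hτ
    simp [hf_def, h1, h2]
  -- the antiderivative
  set F : ℝ → ℝ := fun τ =>
    c / (2 * 2 ^ k) *
      ((Polynomial.Chebyshev.T ℝ ((m : ℤ) + 1)).eval ((2 : ℝ) ^ k * τ - 2 * n + 1) / ((m : ℝ) + 1)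
        - (Polynomial.Chebyshev.T ℝ ((m : ℤ) - 1)).eval ((2 : ℝ) ^ k * τ - 2 * n + 1) / ((m : ℝ) - 1))
    with hF_def
  have h2kne : ((2:ℝ) ^ k) ≠ 0 := by positivity
  have hF : ∀ τ : ℝ, HasDerivAt F (g τ) τ := by
    intro τ
    have hθ : HasDerivAt (fun τ : ℝ => (2:ℝ)^k * τ - 2*(n:ℝ) + 1) ((2:ℝ)^k) τ := by
      simpa using (((hasDerivAt_id τ).const_mul ((2:ℝ)^k)).sub_const (2*(n:ℝ))).add_const 1
    have hP1 := ((Polynomial.Chebyshev.T ℝ ((m : ℤ) + 1)).hasDerivAt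
      ((2:ℝ)^k * τ - 2*(n:ℝ) + 1)).comp τ hθ
    have hP2 := ((Polynomial.Chebyshev.T ℝ ((m : ℤ) - 1)).hasDerivAt
      ((2:ℝ)^k * τ - 2*(n:ℝ) + 1)).comp τ hθ
    have hd := ((hP1.div_const ((m:ℝ)+1)).sub (hP2.div_const ((m:ℝ)-1))).const_mul
      (c / (2 * 2 ^ k))
    convert hd using 1
    · rfl
    · rfl
    · rfl
    have key := cheb_deriv_key m hm ((2:ℝ)^k * τ - 2*(n:ℝ) + 1)
    have hm1 : ((m : ℝ) + 1) ≠ 0 := by positivity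
    have hm2 : ((m : ℝ) - 1) ≠ 0 := by
      have : (2 : ℝ) ≤ m := by exact_mod_cast hm
      nlinarith
    simp only [hg_def]
    field_simp
    linear_combination (-c) * key
  have hcalc : (∫ τ in a..x, g τ) = F x - F a :=
    intervalIntegral.integral_eq_sub_of_hasDerivAt (fun τ _ => hF τ)
      (hgc.intervalIntegrable a x)
  have htotal : (∫ τ in (0:ℝ)..x, f τ) = F x - F a := by
    rw [← intervalIntegral.integral_add_adjacent_intervals (hfi 0 a) (hfi a x), h0a, hax,
      zero_add, hcalc]
  have hθa : (2:ℝ)^k * a - 2*(n:ℝ) + 1 = -1 := by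
    rw [h2k, ha_def]
    field_simp
    ring
  -- final numeric rearrangement
  have hm1 : ((m : ℝ) + 1) ≠ 0 := by positivity
  have hconst : c / (2 * 2 ^ k) = chebGamma m * (2 : ℝ) ^ (-((k : ℝ) - 1) / 2 - 2) := by
    rw [hc_def, ← Real.rpow_natCast 2 k,
      show (2:ℝ) * (2:ℝ) ^ ((k:ℕ):ℝ) = (2:ℝ) ^ (((k:ℕ):ℝ) + 1) by
        rw [Real.rpow_add_one (by norm_num)]; exact (mul_comm _ _),
      mul_div_assoc, ← Real.rpow_sub (by norm_num)]
    congr 1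
    ring
  have hz1 : ((-1:ℝ) ^ ((m:ℤ) + 1)) = (-1:ℝ) ^ (m + 1) := by
    rw [show ((m:ℤ) + 1) = ((m + 1 : ℕ) : ℤ) by push_cast; ring, zpow_natCast]
  have hz2 : ((-1:ℝ) ^ ((m:ℤ) - 1)) = (-1:ℝ) ^ (m - 1) := by
    rw [show ((m:ℤ) - 1) = ((m - 1 : ℕ) : ℤ) by omega, zpow_natCast]
  calc (∫ τ in (0:ℝ)..x, f τ) = F x - F a := htotal
    _ = _ := by
        rw [hF_def]
        simp only [hθa, cheb_T_eval_neg_one, hz1, hz2]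
        rw [hconst]
        ring
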